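/- Let ψ ∈ C²(ℝ^d) satisfy sup_x (|ψ(x)| + |∇ψ(x)| + |D²ψ(x)|)/W(x) < ∞. Then ψ ∈ I_+^W if and only if there exists λ > 0 such that for all x, y ∈ ℝ^d: Δψ(x) + Δψ(y) − ⟨K(x,y), ∇ψ(x)⟩ − ⟨K(y,x), ∇ψ(y)⟩ = λ(ψ(x) + ψ(y)). In particular, if ψ ∈ I_+^W with associated λ(ψ), then Δψ(x) − ⟨K(x,x), ∇ψ(x)⟩ = λ(ψ)ψ(x) for all x. -/

import Mathlib

open MeasureTheory Real Set Filter Metric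
open scoped Topology RealInnerProductSpace NNReal ENNReal

noncomputable section

abbrev Ed (d : ℕ) : Type := EuclideanSpace ℝ (Fin d)

variable {d : ℕ}

/-- Second-order partial derivative `∂_i ∂_j φ (x)`. -/
def hess2 (φ : Ed d → ℝ) (x : Ed d) (i j : Fin d) : ℝ :=
  iteratedFDeriv ℝ 2 φ x ![EuclideanSpace.single i 1, EuclideanSpace.single j 1]

/-- The Laplacian. -/
def lap (φ : Ed d → ℝ) (x : Ed d) : ℝ := ∑ i, hess2 φ x i i

/-- The Kolmogorov operator with unit diffusion: `L φ = Δφ + ⟨B, ∇φ⟩`. -/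
def LopI (B : Ed d → Ed d) (φ : Ed d → ℝ) (x : Ed d) : ℝ :=
  lap φ x + ⟪B x, gradient φ x⟫

/-- Membership in `𝒫_V(ℝ^d)`. -/
def memPV (V : Ed d → ℝ) (μ : Measure (Ed d)) : Prop :=
  IsProbabilityMeasure μ ∧ Integrable V μ

/-- Growth bound defining the class of admissible `ψ`. -/
def GrowthW (W ψ : Ed d → ℝ) : Prop :=
  ∃ M : ℝ, ∀ x, |ψ x| + ‖gradient ψ x‖ + ‖iteratedFDeriv ℝ 2 ψ x‖ ≤ M * W x

/-- The convolution drift `b(x,μ) = -∫ K(x,y) μ(dy)`. -/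
def bConv (K : Ed d → Ed d → Ed d) (μ : Measure (Ed d)) (x : Ed d) : Ed d :=
  -∫ y, K x y ∂μ

/-- The class `I_+^W` for the drift `b(x,μ) = -∫ K(x,y) μ(dy)` and `A = I`. -/
def IplusWconv (K : Ed d → Ed d → Ed d) (V W : Ed d → ℝ) (ψ : Ed d → ℝ) : Prop :=
  ContDiff ℝ 2 ψ ∧ GrowthW W ψ ∧
    ∃ lam > (0:ℝ), ∀ μ : Measure (Ed d), memPV V μ →
      ∫ x, LopI (bConv K μ) ψ x ∂μ = lam * ∫ x, ψ x ∂μ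

lemma integrable_dirac_any {E : Type*} [NormedAddCommGroup E] (f : Ed d → E) (a : Ed d) :
    Integrable f (Measure.dirac a) :=
  (integrable_const (f a)).congr (MeasureTheory.ae_eq_dirac f).symm
lemma continuous_gradient' {ψ : Ed d → ℝ} (hψ : ContDiff ℝ 2 ψ) : Continuous (gradient ψ) := by
  have h := hψ.continuous_fderiv (by norm_num)
  exact ((InnerProductSpace.toDual ℝ (Ed d)).symm.continuous.comp h)
lemma continuous_lap {ψ : Ed d → ℝ} (hψ : ContDiff ℝ 2 ψ) : Continuous (lap ψ) := by
  unfold lap hess2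
  refine continuous_finset_sum _ fun i _ => ?_
  exact (hψ.continuous_iteratedFDeriv (by norm_num)).eval continuous_const
lemma abs_hess2_le {ψ : Ed d → ℝ} (x : Ed d) (i j : Fin d) :
    |hess2 ψ x i j| ≤ ‖iteratedFDeriv ℝ 2 ψ x‖ := by
  have h := (iteratedFDeriv ℝ 2 ψ x).le_opNorm ![EuclideanSpace.single i 1, EuclideanSpace.single j 1]
  simpa [hess2, Fin.prod_univ_two, EuclideanSpace.norm_single] using h
lemma abs_lap_le {ψ : Ed d → ℝ} (x : Ed d) :
    |lap ψ x| ≤ (d : ℝ) * ‖iteratedFDeriv ℝ 2 ψ x‖ := by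
  calc |lap ψ x| ≤ ∑ i : Fin d, |hess2 ψ x i i| := Finset.abs_sum_le_sum_abs _ _
    _ ≤ ∑ _i : Fin d, ‖iteratedFDeriv ℝ 2 ψ x‖ :=
        Finset.sum_le_sum fun i _ => abs_hess2_le x i i
    _ = (d : ℝ) * ‖iteratedFDeriv ℝ 2 ψ x‖ := by simp [mul_comm]
lemma integral_mix {E : Type*} [NormedAddCommGroup E] [NormedSpace ℝ E] [CompleteSpace E] (f : Ed d → E) (x y : Ed d) :
    ∫ z, f z ∂((2:ℝ≥0∞)⁻¹ • (Measure.dirac x + Measure.dirac y)) = (2⁻¹:ℝ) • (f x + f y) := by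
  rw [integral_smul_measure,
    integral_add_measure (integrable_dirac_any f x) (integrable_dirac_any f y),
    integral_dirac, integral_dirac]
  norm_num
lemma memPV_mix (V : Ed d → ℝ) (x y : Ed d) :
    memPV V ((2:ℝ≥0∞)⁻¹ • (Measure.dirac x + Measure.dirac y)) := by
  constructor
  · constructor
    simp [Measure.smul_apply]
    exact ENNReal.inv_two_add_inv_two
  · exact (((integrable_dirac_any V x).add_measure (integrable_dirac_any V y)).smul_measure
      (by norm_num))
lemma memPV_dirac (V : Ed d → ℝ) (x : Ed d) : memPV V (Measure.dirac x) :=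
  ⟨inferInstance, integrable_dirac_any V x⟩
lemma dirac_test (K : Ed d → Ed d → Ed d) (V : Ed d → ℝ) (ψ : Ed d → ℝ) (lam : ℝ)
    (hrel : ∀ μ : Measure (Ed d), memPV V μ →
      ∫ x, LopI (bConv K μ) ψ x ∂μ = lam * ∫ x, ψ x ∂μ) (x : Ed d) :
    lap ψ x - ⟪K x x, gradient ψ x⟫ = lam * ψ x := by
  have h := hrel _ (memPV_dirac V x)
  rw [integral_dirac, integral_dirac] at h
  simp only [LopI, bConv, integral_dirac, inner_neg_left] at h
  linarith
lemma mix_test (K : Ed d → Ed d → Ed d) (V : Ed d → ℝ) (ψ : Ed d → ℝ) (lam : ℝ)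
    (hrel : ∀ μ : Measure (Ed d), memPV V μ →
      ∫ x, LopI (bConv K μ) ψ x ∂μ = lam * ∫ x, ψ x ∂μ) (x y : Ed d) :
    lap ψ x + lap ψ y - ⟪K x y, gradient ψ x⟫ - ⟪K y x, gradient ψ y⟫ = lam * (ψ x + ψ y) := by
  have h := hrel _ (memPV_mix V x y)
  rw [integral_mix, integral_mix] at h
  have hb : ∀ z : Ed d, bConv K ((2:ℝ≥0∞)⁻¹ • (Measure.dirac x + Measure.dirac y)) z
      = -((2⁻¹:ℝ) • (K z x + K z y)) := fun z => by
    rw [bConv, integral_mix]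
  simp only [LopI, hb, inner_neg_left, inner_smul_left, inner_add_left, smul_eq_mul,
    RCLike.conj_to_real, conj_trivial] at h
  have hx := dirac_test K V ψ lam hrel x
  have hy := dirac_test K V ψ lam hrel y
  linarith
lemma reverse_test (V : Ed d → ℝ) (hVc : Continuous V) (hV1 : ∀ x, 1 ≤ V x)
    (γ : ℝ) (hγ0 : 0 < γ) (hγ1 : γ ≤ 1)
    (K : Ed d → Ed d → Ed d)
    (hKmeas : Measurable fun p : Ed d × Ed d => K p.1 p.2)
    (CK : ℝ) (hKgrow : ∀ x y, ‖K x y‖ ≤ CK * V x ^ (1 - γ))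
    (ψ : Ed d → ℝ) (hψC2 : ContDiff ℝ 2 ψ) (M : ℝ)
    (hM : ∀ x, |ψ x| + ‖gradient ψ x‖ + ‖iteratedFDeriv ℝ 2 ψ x‖ ≤ M * V x ^ γ)
    (lam : ℝ)
    (hpair : ∀ x y, lap ψ x + lap ψ y - ⟪K x y, gradient ψ x⟫ - ⟪K y x, gradient ψ y⟫
      = lam * (ψ x + ψ y))
    (μ : Measure (Ed d)) (hprob : IsProbabilityMeasure μ) (hVint : Integrable V μ) :
    ∫ x, LopI (bConv K μ) ψ x ∂μ = lam * ∫ x, ψ x ∂μ := by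
  have hVpos : ∀ x, (0:ℝ) < V x := fun x => lt_of_lt_of_le one_pos (hV1 x)
  have hWle : ∀ x, V x ^ γ ≤ V x := fun x => by
    simpa using Real.rpow_le_rpow_of_exponent_le (hV1 x) hγ1
  have hWpos : ∀ x, (0:ℝ) < V x ^ γ := fun x => Real.rpow_pos_of_pos (hVpos x) _
  have hM0 : 0 ≤ M := by
    have h := hM 0
    nlinarith [abs_nonneg (ψ (0:Ed d)), norm_nonneg (gradient ψ (0:Ed d)),
      norm_nonneg (iteratedFDeriv ℝ 2 ψ (0:Ed d)), hWpos (0:Ed d)]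
  have hpsib : ∀ x, |ψ x| ≤ M * V x := fun x => by
    have := hM x
    nlinarith [norm_nonneg (gradient ψ x), norm_nonneg (iteratedFDeriv ℝ 2 ψ x), hWle x, hWpos x]
  have hgradb : ∀ x, ‖gradient ψ x‖ ≤ M * V x ^ γ := fun x => by
    have := hM x
    nlinarith [abs_nonneg (ψ x), norm_nonneg (iteratedFDeriv ℝ 2 ψ x)]
  have hlapb : ∀ x, |lap ψ x| ≤ (d * M) * V x := fun x => by
    have h1 := abs_lap_le (ψ := ψ) x
    have h2 : ‖iteratedFDeriv ℝ 2 ψ x‖ ≤ M * V x := by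
      have := hM x
      nlinarith [abs_nonneg (ψ x), norm_nonneg (gradient ψ x), hWle x, hWpos x]
    have hd : (0:ℝ) ≤ (d:ℝ) := Nat.cast_nonneg _
    calc |lap ψ x| ≤ (d:ℝ) * ‖iteratedFDeriv ℝ 2 ψ x‖ := h1
      _ ≤ (d:ℝ) * (M * V x) := by nlinarith
      _ = (d * M) * V x := by ring
  -- the pair kernel
  set g : Ed d × Ed d → ℝ := fun p => ⟪K p.1 p.2, gradient ψ p.1⟫ with hg
  have hgb : ∀ p : Ed d × Ed d, ‖g p‖ ≤ (CK * M) * V p.1 := by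
    rintro ⟨x, y⟩
    have h1 : ‖g (x, y)‖ ≤ ‖K x y‖ * ‖gradient ψ x‖ := norm_inner_le_norm _ _
    have h2 : ‖K x y‖ * ‖gradient ψ x‖ ≤ (CK * V x ^ (1 - γ)) * (M * V x ^ γ) :=
      mul_le_mul (hKgrow x y) (hgradb x) (norm_nonneg _)
        (le_trans (norm_nonneg _) (hKgrow x y))
    have h3 : (CK * V x ^ (1 - γ)) * (M * V x ^ γ) = (CK * M) * V x := by
      have hvv : V x ^ (1 - γ) * V x ^ γ = V x := by
        rw [← Real.rpow_add (hVpos x)]; norm_num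
      calc (CK * V x ^ (1 - γ)) * (M * V x ^ γ) = (CK*M)*(V x ^ (1-γ) * V x ^ γ) := by ring
        _ = (CK * M) * V x := by rw [hvv]
    calc ‖g (x,y)‖ ≤ _ := h1
      _ ≤ _ := h2
      _ ≤ _ := h3.le
  have hgmeas : Measurable g :=
    hKmeas.inner ((continuous_gradient' hψC2).measurable.comp measurable_fst)
  -- integrability of V ∘ fst on the product
  have hVfst : Integrable (fun p : Ed d × Ed d => V p.1) (μ.prod μ) := by
    have h1 : Integrable V (Measure.map Prod.fst (μ.prod μ)) := by
      rw [Measure.map_fst_prod]; simpa using hVint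
    exact (integrable_map_measure hVc.aestronglyMeasurable measurable_fst.aemeasurable).mp h1
  -- integrability of g on the product
  have hgprod : Integrable g (μ.prod μ) :=
    Integrable.mono' (hVfst.const_mul (CK * M)) hgmeas.aestronglyMeasurable
      (ae_of_all _ hgb)
  -- per-x integrability facts
  have hKint : ∀ x, Integrable (fun y => K x y) μ := fun x => by
    refine Integrable.mono' (integrable_const (CK * V x ^ (1 - γ)))
      ((hKmeas.comp (measurable_prodMk_left)).aestronglyMeasurable) (ae_of_all _ fun y => hKgrow x y)
  have hgx : ∀ x, Integrable (fun y => g (x, y)) μ := fun x => by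
    refine Integrable.mono' (integrable_const ((CK * M) * V x))
      ((hgmeas.comp (measurable_prodMk_left)).aestronglyMeasurable)
      (ae_of_all _ fun y => hgb (x, y))
  have hgy : ∀ x, Integrable (fun y => g (y, x)) μ := fun x => by
    refine Integrable.mono' (hVint.const_mul (CK * M))
      ((hgmeas.comp (measurable_prodMk_right)).aestronglyMeasurable)
      (ae_of_all _ fun y => hgb (y, x))
  -- pointwise rewriting of LopI
  have hLop : ∀ x, LopI (bConv K μ) ψ x = lap ψ x - ∫ y, g (x, y) ∂μ := by
    intro x
    have h1 : ⟪bConv K μ x, gradient ψ x⟫ = -∫ y, g (x, y) ∂μ := by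
      rw [bConv, inner_neg_left, real_inner_comm, ← integral_inner (hKint x)]
      rw [neg_inj]
      exact integral_congr_ae (ae_of_all _ fun y => real_inner_comm _ _)
    rw [LopI, h1]; ring
  -- integrability wrt μ of the pieces
  have hlapint : Integrable (lap ψ) μ :=
    Integrable.mono' (hVint.const_mul (d * M)) (continuous_lap hψC2).aestronglyMeasurable
      (ae_of_all _ fun x => by simpa [Real.norm_eq_abs] using hlapb x)
  have hpsint : Integrable ψ μ :=
    Integrable.mono' (hVint.const_mul M) hψC2.continuous.aestronglyMeasurable
      (ae_of_all _ fun x => by simpa [Real.norm_eq_abs] using hpsib x)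
  have hsub : Integrable (fun a => lap ψ a - lam * ψ a) μ := hlapint.sub (hpsint.const_mul lam)
  have hGint : Integrable (fun x => ∫ y, g (x, y) ∂μ) μ := hgprod.integral_prod_left
  have hG2int : Integrable (fun x => ∫ y, g (y, x) ∂μ) μ := by
    have := (hgprod.swap).integral_prod_left
    simpa [Function.comp] using this
  set I1 : ℝ := ∫ x, lap ψ x ∂μ with hI1
  set Iψ : ℝ := ∫ x, ψ x ∂μ with hIψ
  set Ig : ℝ := ∫ x, ∫ y, g (x, y) ∂μ ∂μ with hIg
  -- swap identity
  have hswap : (∫ x, ∫ y, g (y, x) ∂μ ∂μ) = Ig := by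
    have hsw : Integrable (Function.uncurry fun x y => g (y, x)) (μ.prod μ) := by
      exact hgprod.swap
    have := integral_integral_swap hsw
    simpa using this
  -- integrate the pairwise identity
  have key : Ig + Ig = (I1 - lam * Iψ) + (I1 - lam * Iψ) := by
    have inner_eq : ∀ x, (∫ y, g (x, y) ∂μ) + (∫ y, g (y, x) ∂μ)
        = (lap ψ x - lam * ψ x) + (I1 - lam * Iψ) := by
      intro x
      rw [← integral_add (hgx x) (hgy x)]
      have : ∀ y, g (x, y) + g (y, x) = (lap ψ x - lam * ψ x) + (lap ψ y - lam * ψ y) := by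
        intro y
        have := hpair x y
        simp only [hg] at *
        linarith
      rw [integral_congr_ae (ae_of_all _ this),
        integral_add (integrable_const _) hsub,
        integral_sub hlapint (hpsint.const_mul lam), integral_const_mul]
      simp [measure_univ]
      rfl
    calc Ig + Ig = Ig + ∫ x, ∫ y, g (y, x) ∂μ ∂μ := by rw [hswap]
      _ = ∫ x, ((∫ y, g (x, y) ∂μ) + (∫ y, g (y, x) ∂μ)) ∂μ := (integral_add hGint hG2int).symm
      _ = ∫ x, ((lap ψ x - lam * ψ x) + (I1 - lam * Iψ)) ∂μ :=
          integral_congr_ae (ae_of_all _ inner_eq)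
      _ = (I1 - lam * Iψ) + (I1 - lam * Iψ) := by
          rw [integral_add hsub (integrable_const _),
            integral_sub hlapint (hpsint.const_mul lam), integral_const_mul]
          simp [measure_univ]
          rfl
  have hIgval : Ig = I1 - lam * Iψ := by linarith
  calc ∫ x, LopI (bConv K μ) ψ x ∂μ = ∫ x, (lap ψ x - ∫ y, g (x, y) ∂μ) ∂μ :=
        integral_congr_ae (ae_of_all _ hLop)
    _ = I1 - Ig := integral_sub hlapint hGint
    _ = lam * Iψ := by rw [hIgval]; ring

/-- **Proposition 4**: characterization of `I_+^W` for convolution drifts. -/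
theorem stmt7_IplusW_characterization
    (V : Ed d → ℝ) (hV : ContDiff ℝ 2 V) (hV1 : ∀ x, 1 ≤ V x)
    (hVinf : Tendsto V (cocompact (Ed d)) atTop)
    (γ : ℝ) (hγ : γ ∈ Set.Ioc (0:ℝ) (1/2))
    (W : Ed d → ℝ) (hW : W = fun x => V x ^ γ)
    (K : Ed d → Ed d → Ed d)
    (hKmeas : Measurable fun p : Ed d × Ed d => K p.1 p.2)
    (CK : ℝ) (hKgrow : ∀ x y, ‖K x y‖ ≤ CK * V x ^ (1 - γ))
    (ψ : Ed d → ℝ) (hψC2 : ContDiff ℝ 2 ψ) (hψgrow : GrowthW W ψ) :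
    -- the equivalence
    (IplusWconv K V W ψ ↔
      ∃ lam > (0:ℝ), ∀ x y : Ed d,
        lap ψ x + lap ψ y - ⟪K x y, gradient ψ x⟫ - ⟪K y x, gradient ψ y⟫
          = lam * (ψ x + ψ y))
    ∧
    -- "in particular", for the associated λ(ψ)
    (∀ lam : ℝ, 0 < lam →
      (∀ μ : Measure (Ed d), memPV V μ →
        ∫ x, LopI (bConv K μ) ψ x ∂μ = lam * ∫ x, ψ x ∂μ) →
      ∀ x, lap ψ x - ⟪K x x, gradient ψ x⟫ = lam * ψ x) := by
  obtain ⟨hγ0, hγ1⟩ := hγ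
  subst hW
  constructor
  · constructor
    · rintro ⟨-, -, lam, hlam, hrel⟩
      exact ⟨lam, hlam, fun x y => mix_test K V ψ lam hrel x y⟩
    · rintro ⟨lam, hlam, hpair⟩
      refine ⟨hψC2, hψgrow, lam, hlam, fun μ hμ => ?_⟩
      obtain ⟨M, hM⟩ := hψgrow
      exact reverse_test V hV.continuous hV1 γ hγ0 (le_trans hγ1 (by norm_num)) K hKmeas CK
        hKgrow ψ hψC2 M hM lam hpair μ hμ.1 hμ.2
  · intro lam hlam hrel x
    exact dirac_test K V ψ lam hrel x
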